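/- Define functions T_m : ℂ → ℂ for integers m ≥ 0 recursively by T_0 ≡ 1 and, for m ≥ 1, by requiring Σ_{a=0}^{m} (−1)^a · T_{m−a}(u+m+a) · T^a(u+a) = 0 for all u ∈ ℂ (since T^0 ≡ 1 this determines T_m uniquely; these are the coefficients of the formal expansion L^{−1} = Σ_{m≥0} T_m(u+m) D^m). Then the companion T–T relation holds: for every integer m ≥ 1 and every u ∈ ℂ, Σ_{a=0}^{m} (−1)^a · T_{m−a}(u−m−a) · T^a(u−a) = 0. -/

import Mathlib

open Complex

noncomputable def oneSubXD (x w : ℂ → ℂ) : ℂ → ℂ := fun u => w u - x u * w (u + 2)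

noncomputable def Lop (x : ℕ → ℂ → ℂ) : ℕ → (ℂ → ℂ) → (ℂ → ℂ)
  | 0 => fun w => w
  | k + 1 => fun w => oneSubXD (x (k + 1)) (Lop x k w)

lemma Lop_succ (x : ℕ → ℂ → ℂ) (k : ℕ) (w : ℂ → ℂ) (v : ℂ) :
    Lop x (k+1) w v = Lop x k w v - x (k+1) v * Lop x k w (v + 2) := rfl

lemma Lop_zero_of (x : ℕ → ℂ → ℂ) (k : ℕ) (w : ℂ → ℂ) (v : ℂ)
    (h : ∀ i : ℕ, i ≤ k → w (v + 2 * i) = 0) : Lop x k w v = 0 := by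
  induction k generalizing v with
  | zero =>
    have := h 0 le_rfl
    show w v = 0
    simpa using this
  | succ k ih =>
    rw [Lop_succ]
    have h1 : Lop x k w v = 0 := ih v (fun i hi => h i (hi.trans (Nat.le_succ k)))
    have h2 : Lop x k w (v + 2) = 0 := by
      apply ih
      intro i hi
      have := h (i+1) (Nat.succ_le_succ hi)
      have harg : v + 2 + 2 * (i : ℂ) = v + 2 * ((i : ℕ) + 1 : ℕ) := by push_cast; ring
      rw [harg]; exact this
    rw [h1, h2, mul_zero, sub_zero]

lemma Lop_eval (x : ℕ → ℂ → ℂ) (k : ℕ) (w : ℂ → ℂ) (u : ℂ)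
    (h : ∀ i : ℕ, 1 ≤ i → i ≤ k → w (u + 2 * i) = 0) : Lop x k w u = w u := by
  induction k with
  | zero => rfl
  | succ k ih =>
    rw [Lop_succ]
    have h1 : Lop x k w u = w u := ih (fun i hi hik => h i hi (hik.trans (Nat.le_succ k)))
    have h2 : Lop x k w (u + 2) = 0 := by
      apply Lop_zero_of
      intro i hi
      have := h (i+1) (Nat.succ_le_succ (Nat.zero_le i)) (Nat.succ_le_succ hi)
      have harg : u + 2 + 2 * (i : ℂ) = u + 2 * ((i : ℕ) + 1 : ℕ) := by push_cast; ring
      rw [harg]; exact this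
    rw [h1, h2, mul_zero, sub_zero]

open Finset in
lemma conv_entry (m : ℕ) (v : ℂ) (f g : ℕ → ℂ → ℂ) (i j : Fin (m+1)) :
    ∑ k : Fin (m+1),
      (if (i:ℕ) ≤ (k:ℕ) then f ((k:ℕ) - i) (v + 2*((i:ℕ):ℂ)) else 0) *
      (if (k:ℕ) ≤ (j:ℕ) then g ((j:ℕ) - k) (v + 2*((k:ℕ):ℂ)) else 0)
    = if (i:ℕ) ≤ (j:ℕ) then
        ∑ d ∈ range ((j:ℕ) - i + 1),
          f d (v + 2*((i:ℕ):ℂ)) * g ((j:ℕ) - i - d) ((v + 2*((i:ℕ):ℂ)) + 2*(d:ℂ))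
      else 0 := by
  classical
  rw [Fin.sum_univ_eq_sum_range (fun k =>
      (if (i:ℕ) ≤ k then f (k - i) (v + 2*((i:ℕ):ℂ)) else 0) *
      (if k ≤ (j:ℕ) then g ((j:ℕ) - k) (v + 2*((k:ℕ):ℂ)) else 0)) (m+1)]
  by_cases hij : (i:ℕ) ≤ (j:ℕ)
  · rw [if_pos hij]
    have hsub : Icc (i:ℕ) (j:ℕ) ⊆ range (m+1) := by
      intro k hk
      rw [mem_Icc] at hk
      exact mem_range.mpr (Nat.lt_succ_of_le (hk.2.trans (Nat.lt_succ_iff.mp j.isLt)))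
    rw [← Finset.sum_subset hsub]
    · rw [← Finset.Ico_add_one_right_eq_Icc, Finset.sum_Ico_eq_sum_range]
      have hlen : (j:ℕ) + 1 - (i:ℕ) = (j:ℕ) - i + 1 := by omega
      rw [hlen]
      apply Finset.sum_congr rfl
      intro d hd
      rw [mem_range] at hd
      have hd' : d ≤ (j:ℕ) - i := Nat.lt_succ_iff.mp hd
      have h1 : (i:ℕ) ≤ (i:ℕ) + d := Nat.le_add_right _ _
      have h2 : (i:ℕ) + d ≤ (j:ℕ) := by omega
      rw [if_pos h1, if_pos h2]
      have e1 : (i:ℕ) + d - (i:ℕ) = d := by omega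
      have e2 : (j:ℕ) - ((i:ℕ) + d) = (j:ℕ) - i - d := by omega
      have e3 : v + 2*((((i:ℕ) + d : ℕ)):ℂ) = (v + 2*((i:ℕ):ℂ)) + 2*(d:ℂ) := by
        push_cast; ring
      rw [e1, e2, e3]
    · intro k hk hk'
      rw [mem_Icc] at hk'
      push_neg at hk'
      by_cases h1 : (i:ℕ) ≤ k
      · rw [if_neg (by omega : ¬ k ≤ (j:ℕ)), mul_zero]
      · rw [if_neg h1, zero_mul]
  · rw [if_neg hij]
    apply Finset.sum_eq_zero
    intro k _
    by_cases h1 : (i:ℕ) ≤ k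
    · rw [if_neg (by omega : ¬ k ≤ (j:ℕ)), mul_zero]
    · rw [if_neg h1, zero_mul]

open Finset in
lemma key_inv (A B : ℕ → ℂ → ℂ)
    (hG0 : ∀ v : ℂ, A 0 v * B 0 v = 1)
    (hG : ∀ k : ℕ, 1 ≤ k → ∀ v : ℂ,
      ∑ a ∈ range (k+1), A a v * B (k-a) (v + 2*(a:ℂ)) = 0)
    (m : ℕ) (hm : 1 ≤ m) (v : ℂ) :
    ∑ a ∈ range (m+1), B a v * A (m-a) (v + 2*(a:ℂ)) = 0 := by
  classical
  set MA : Matrix (Fin (m+1)) (Fin (m+1)) ℂ :=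
    Matrix.of (fun i j => if (i:ℕ) ≤ (j:ℕ) then A ((j:ℕ) - i) (v + 2*((i:ℕ):ℂ)) else 0)
    with hMA
  set MB : Matrix (Fin (m+1)) (Fin (m+1)) ℂ :=
    Matrix.of (fun i j => if (i:ℕ) ≤ (j:ℕ) then B ((j:ℕ) - i) (v + 2*((i:ℕ):ℂ)) else 0)
    with hMB
  have hABone : MA * MB = 1 := by
    ext i j
    rw [Matrix.mul_apply, Matrix.one_apply]
    have := conv_entry m v A B i j
    simp only [hMA, hMB, Matrix.of_apply] at this ⊢
    rw [this]
    by_cases hij : (i:ℕ) ≤ (j:ℕ)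
    · rcases eq_or_lt_of_le hij with heq | hlt
      · have : i = j := Fin.ext heq
        rw [if_pos hij, if_pos this]
        rw [heq]
        simp only [Nat.sub_self]
        rw [Finset.sum_range_one]
        simpa using hG0 (v + 2*((j:ℕ):ℂ))
      · have hne : i ≠ j := by
          intro h; rw [h] at hlt; exact lt_irrefl _ hlt
        rw [if_pos hij, if_neg hne]
        have hpos : 1 ≤ (j:ℕ) - i := by omega
        exact hG ((j:ℕ) - i) hpos (v + 2*((i:ℕ):ℂ))
    · have hne : i ≠ j := by
        intro h; rw [h] at hij; exact hij le_rfl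
      rw [if_neg hij, if_neg hne]
  have hBA : MB * MA = 1 := mul_eq_one_comm.mp hABone
  have h0 : (0 : Fin (m+1)) = ⟨0, Nat.succ_pos m⟩ := rfl
  have hlast : (Fin.last m : Fin (m+1)) = ⟨m, Nat.lt_succ_self m⟩ := rfl
  have hentry := congrArg (fun M : Matrix (Fin (m+1)) (Fin (m+1)) ℂ =>
    M ⟨0, Nat.succ_pos m⟩ ⟨m, Nat.lt_succ_self m⟩) hBA
  simp only [Matrix.mul_apply] at hentry
  have hone : (1 : Matrix (Fin (m+1)) (Fin (m+1)) ℂ)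
      ⟨0, Nat.succ_pos m⟩ ⟨m, Nat.lt_succ_self m⟩ = 0 := by
    rw [Matrix.one_apply]
    rw [if_neg]
    intro h
    have : (0:ℕ) = m := congrArg Fin.val h
    omega
  rw [hone] at hentry
  have hconv := conv_entry m v B A ⟨0, Nat.succ_pos m⟩ ⟨m, Nat.lt_succ_self m⟩
  simp only [hMA, hMB, Matrix.of_apply] at hentry
  rw [hconv] at hentry
  simp only [Nat.zero_le, if_pos, Nat.sub_zero, Nat.cast_zero, mul_zero, add_zero] at hentry
  exact hentry
theorem TT_companion_A2_even
    (n : ℕ) (hn : 1 ≤ n) (N : ℕ) (hN : N = 2 * n)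
    (hbar : ℂ) (hbar_ne : hbar ≠ 0) (s : ℂ)
    (hs : s = (Real.pi : ℂ) * Complex.I / (2 * hbar))
    (Q : ℕ → ℂ → ℂ) (hQ0 : ∀ u, Q 0 u = 1)
    (hQne : ∀ a, 1 ≤ a → a ≤ n → ∀ u, Q a u ≠ 0)
    (hconst : ℕ → ℂ)
    (hQper : ∀ a, 1 ≤ a → a ≤ n → hconst a ≠ 0 ∧
      ∀ u, Q a (u + (Real.pi : ℂ) * Complex.I / hbar) = hconst a * Q a u)
    (Y : ℕ → ℂ → ℂ) (hY : ∀ a u, Y a u = Q a (u - 1) / Q a (u + 1))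
    (x : ℕ → ℂ → ℂ)
    (hxa : ∀ a, 1 ≤ a → a ≤ n → ∀ u : ℂ,
      x a u = Y a (u + a) / Y (a - 1) (u + a + 1))
    (hx0 : ∀ u : ℂ, x (n + 1) u = Y n (u + n + 1 + s) / Y n (u + n + 2))
    (hxbar : ∀ a, 1 ≤ a → a ≤ n → ∀ u : ℂ,
      x (2 * n - a + 2) u = Y (a - 1) (u + 2 * (n : ℂ) - a + 2 + s)
        / Y a (u + 2 * (n : ℂ) - a + 3 + s))
    (T : ℤ → ℂ → ℂ)
    (hTneg : ∀ a : ℤ, a < 0 → ∀ u, T a u = 0)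
    (hTbig : ∀ a : ℤ, (N : ℤ) + 1 < a → ∀ u, T a u = 0)
    (hTL : ∀ w : ℂ → ℂ, ∀ u : ℂ, Lop x (N + 1) w u
      = ∑ a ∈ Finset.range (N + 2), (-1) ^ a * T a (u + a) * w (u + 2 * a))
    (Tm : ℕ → ℂ → ℂ) (hTm0 : ∀ u, Tm 0 u = 1)
    (hTmrec : ∀ m : ℕ, 1 ≤ m → ∀ u : ℂ,
      ∑ a ∈ Finset.range (m + 1),
        (-1) ^ a * Tm (m - a) (u + m + a) * T (a : ℤ) (u + a) = 0)
    :
    ∀ m : ℕ, 1 ≤ m → ∀ u : ℂ,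
      ∑ a ∈ Finset.range (m + 1),
        (-1) ^ a * Tm (m - a) (u - m - a) * T (a : ℤ) (u - a) = 0 := by
  classical
  -- Step 1: T 0 = 1
  have hT0 : ∀ u : ℂ, T 0 u = 1 := by
    intro u
    set w : ℂ → ℂ := fun v => if v = u then 1 else 0 with hw
    have hwz : ∀ i : ℕ, 1 ≤ i → w (u + 2 * (i : ℂ)) = 0 := by
      intro i hi
      have hne : u + 2 * (i : ℂ) ≠ u := by
        intro h
        have h2 : (2 : ℂ) * i = 0 := by linear_combination h
        have : (i : ℂ) = 0 := by
          rcases mul_eq_zero.mp h2 with h | h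
          · norm_num at h
          · exact h
        have : i = 0 := by exact_mod_cast this
        omega
      simp [hw, hne]
    have hL : Lop x (N + 1) w u = 1 := by
      rw [Lop_eval x (N+1) w u (fun i hi _ => hwz i hi)]
      simp [hw]
    have hR := hTL w u
    rw [hL] at hR
    have hsum : ∑ a ∈ Finset.range (N + 2), (-1) ^ a * T a (u + a) * w (u + 2 * a)
        = T 0 u := by
      rw [Finset.sum_eq_single 0]
      · simp [hw]
      · intro a _ ha
        have h0 : w (u + 2 * (a : ℂ)) = 0 := hwz a (Nat.one_le_iff_ne_zero.mpr ha)
        rw [h0, mul_zero]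
      · intro h
        exact absurd (Finset.mem_range.mpr (by omega)) h
    rw [hsum] at hR
    exact hR.symm
  -- Step 2: apply key_inv
  intro m hm u
  set A : ℕ → ℂ → ℂ := fun a v => (-1) ^ a * T (a : ℤ) (v + a) with hA
  set B : ℕ → ℂ → ℂ := fun a v => Tm a (v + a) with hB
  have hG0 : ∀ v : ℂ, A 0 v * B 0 v = 1 := by
    intro v
    simp [hA, hB, hT0, hTm0]
  have hG : ∀ k : ℕ, 1 ≤ k → ∀ v : ℂ,
      ∑ a ∈ Finset.range (k+1), A a v * B (k-a) (v + 2*(a:ℂ)) = 0 := by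
    intro k hk v
    have := hTmrec k hk v
    rw [← this]
    apply Finset.sum_congr rfl
    intro a ha
    have ha' : a ≤ k := Nat.lt_succ_iff.mp (Finset.mem_range.mp ha)
    simp only [hA, hB]
    have harg : v + 2*(a:ℂ) + ((k - a : ℕ) : ℂ) = v + k + a := by
      have : ((k - a : ℕ) : ℂ) = (k : ℂ) - a := by
        push_cast [Nat.cast_sub ha']; ring
      rw [this]; ring
    rw [harg]; ring
  have hkey := key_inv A B hG0 hG m hm (u - 2*(m:ℂ))
  -- Step 3: relate to goal via reflection
  rw [← Finset.sum_range_reflect]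
  rw [← hkey]
  apply Finset.sum_congr rfl
  intro j hj
  have hj' : j ≤ m := Nat.lt_succ_iff.mp (Finset.mem_range.mp hj)
  have e0 : m + 1 - 1 - j = m - j := by omega
  rw [e0]
  have e1 : m - (m - j) = j := by omega
  have e2 : ((m - j : ℕ) : ℂ) = (m : ℂ) - j := by
    push_cast [Nat.cast_sub hj']; ring
  simp only [hA, hB, e1, e2]
  have e3 : u - (m:ℂ) - ((m:ℂ) - j) = u - 2*(m:ℂ) + j := by ring
  have e4 : u - ((m:ℂ) - j) = u - 2*(m:ℂ) + 2*(j:ℂ) + ((m:ℂ) - j) := by ring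
  rw [e3, e4]
  ring
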